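/- Let G be a group, H a Hilbert space, U : G → U(H) a unitary representation, and P the orthogonal projection onto the fixed point space H^U = {x : U_g x = x for all g}. Then P lies in the strong closure of the convex hull of {U_g : g ∈ G}. -/

import Mathlib

open scoped RealInnerProductSpace
local notation "⟪" x ", " y "⟫_ℝ" => @inner ℝ _ _ x y
local notation "⟪" x ", " y "⟫_ℂ" => @inner ℂ _ _ x y

theorem min_norm_unique {F : Type*} [NormedAddCommGroup F] [InnerProductSpace ℝ F]
    [CompleteSpace F] {C : Set F} (hne : C.Nonempty) (hcl : IsClosed C) (hconv : Convex ℝ C) :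
    ∃ v ∈ C, ∀ w ∈ C, ‖w‖ = ‖v‖ → w = v := by
  obtain ⟨v, hvC, hv⟩ := exists_norm_eq_iInf_of_complete_convex hne hcl.isComplete hconv 0
  refine ⟨v, hvC, fun w hwC hnw => ?_⟩
  have hineq := (norm_eq_iInf_iff_real_inner_le_zero hconv hvC).1 hv w hwC
  rw [zero_sub] at hineq
  have h1 : ⟪v, v⟫_ℝ ≤ ⟪v, w⟫_ℝ := by
    have := hineq
    rw [inner_neg_left, inner_sub_right] at this
    linarith
  have h2 : ‖w - v‖ ^ 2 ≤ 0 := by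
    rw [norm_sub_sq_real, hnw, real_inner_comm]
    have hv2 : ⟪v, v⟫_ℝ = ‖v‖ ^ 2 := real_inner_self_eq_norm_sq v
    nlinarith
  have : ‖w - v‖ = 0 := by nlinarith [norm_nonneg (w - v), sq_nonneg ‖w - v‖]
  rw [norm_eq_zero, sub_eq_zero] at this
  exact this

section AB

variable {G : Type*} [Group G] {H : Type*} [NormedAddCommGroup H] [InnerProductSpace ℂ H]
  [CompleteSpace H] (U : G →* (H ≃ₗᵢ[ℂ] H))

/-- Abbreviation: the convex hull of the unitaries. -/
private def SS : Set (H →L[ℂ] H) :=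
  convexHull ℝ (Set.range fun g => (U g).toLinearIsometry.toContinuousLinearMap)

omit [CompleteSpace H] in
private theorem mem_SS_of_g (g : G) :
    (U g).toLinearIsometry.toContinuousLinearMap ∈ SS U :=
  subset_convexHull ℝ _ ⟨g, rfl⟩

omit [CompleteSpace H] in
private theorem SS_norm {T : H →L[ℂ] H} (hT : T ∈ SS U) : ‖T‖ ≤ 1 := by
  have : SS U ⊆ Metric.closedBall (0 : H →L[ℂ] H) 1 := by
    apply convexHull_min _ (convex_closedBall _ _)
    rintro _ ⟨g, rfl⟩
    rw [Metric.mem_closedBall, dist_zero_right]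
    exact ContinuousLinearMap.opNorm_le_bound _ zero_le_one fun x => by
      simp [LinearIsometry.norm_map]
  have := this hT
  rwa [Metric.mem_closedBall, dist_zero_right] at this

omit [CompleteSpace H] in
private theorem SS_norm_apply {T : H →L[ℂ] H} (hT : T ∈ SS U) (x : H) : ‖T x‖ ≤ ‖x‖ :=
  calc ‖T x‖ ≤ ‖T‖ * ‖x‖ := T.le_opNorm x
  _ ≤ 1 * ‖x‖ := by have := SS_norm U hT; nlinarith [norm_nonneg x]
  _ = ‖x‖ := one_mul _

omit [CompleteSpace H] in
private theorem SS_fix {T : H →L[ℂ] H} (hT : T ∈ SS U) {z : H} (hz : ∀ g, U g z = z) :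
    T z = z := by
  have : SS U ⊆ {T : H →L[ℂ] H | T z = z} := by
    apply convexHull_min
    · rintro _ ⟨g, rfl⟩
      exact hz g
    · intro T1 h1 T2 h2 a b _ _ hab
      simp only [Set.mem_setOf_eq, ContinuousLinearMap.add_apply,
        ContinuousLinearMap.coe_smul', Pi.smul_apply] at *
      rw [h1, h2, ← add_smul, hab, one_smul]
  exact this hT

omit [CompleteSpace H] in
private theorem SS_inner {T : H →L[ℂ] H} (hT : T ∈ SS U) {z : H} (hz : ∀ g, U g z = z)
    (x : H) : ⟪z, T x⟫_ℂ = ⟪z, x⟫_ℂ := by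
  have : SS U ⊆ {T : H →L[ℂ] H | ⟪z, T x⟫_ℂ = ⟪z, x⟫_ℂ} := by
    apply convexHull_min
    · rintro _ ⟨g, rfl⟩
      show ⟪z, U g x⟫_ℂ = ⟪z, x⟫_ℂ
      conv_lhs => rw [← hz g]
      exact (U g).inner_map_map z x
    · intro T1 h1 T2 h2 a b ha hb hab
      simp only [Set.mem_setOf_eq, ContinuousLinearMap.add_apply,
        ContinuousLinearMap.coe_smul', Pi.smul_apply, inner_add_right] at *
      rw [RCLike.real_smul_eq_coe_smul (K := ℂ) a, RCLike.real_smul_eq_coe_smul (K := ℂ) b,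
        inner_smul_right, inner_smul_right, h1, h2, ← add_mul]
      rw [← RCLike.ofReal_add, hab, RCLike.ofReal_one, one_mul]
  exact this hT

omit [CompleteSpace H] in
private theorem SS_comp {T T' : H →L[ℂ] H} (hT : T ∈ SS U) (hT' : T' ∈ SS U) :
    T.comp T' ∈ SS U := by
  -- first: composing a unitary with an element of SS stays in SS
  have step1 : ∀ g : G, ∀ T' ∈ SS U,
      ((U g).toLinearIsometry.toContinuousLinearMap).comp T' ∈ SS U := by
    intro g T' hT'
    have hlin : IsLinearMap ℝ fun S : H →L[ℂ] H =>
        ((U g).toLinearIsometry.toContinuousLinearMap).comp S := by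
      constructor
      · intro S1 S2; exact ContinuousLinearMap.comp_add _ _ _
      · intro a S; exact ContinuousLinearMap.comp_smul _ _ _
    have himg := hlin.image_convexHull
      (Set.range fun g => (U g).toLinearIsometry.toContinuousLinearMap)
    have hmem : ((U g).toLinearIsometry.toContinuousLinearMap).comp T'
        ∈ (fun S : H →L[ℂ] H => ((U g).toLinearIsometry.toContinuousLinearMap).comp S) ''
          SS U := ⟨T', hT', rfl⟩
    rw [SS, himg] at hmem
    refine convexHull_mono ?_ hmem
    rintro _ ⟨_, ⟨h, rfl⟩, rfl⟩
    refine ⟨g * h, ?_⟩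
    ext x
    simp [map_mul]
  -- second: right-composition with T' maps SS into SS
  have hlin : IsLinearMap ℝ fun S : H →L[ℂ] H => S.comp T' := by
    constructor
    · intro S1 S2; exact ContinuousLinearMap.add_comp _ _ _
    · intro a S; exact ContinuousLinearMap.smul_comp _ _ _
  have hmem : T.comp T' ∈ (fun S : H →L[ℂ] H => S.comp T') '' SS U := ⟨T, hT, rfl⟩
  rw [SS, hlin.image_convexHull] at hmem
  have hsub : (fun S : H →L[ℂ] H => S.comp T') ''
      (Set.range fun g => (U g).toLinearIsometry.toContinuousLinearMap) ⊆ SS U := by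
    rintro _ ⟨_, ⟨g, rfl⟩, rfl⟩
    exact step1 g T' hT'
  exact convexHull_min hsub (convex_convexHull ℝ _) hmem

private theorem SS_exists_approx (K : Submodule ℂ H) [K.HasOrthogonalProjection]
    (hK : (K : Set H) = {x : H | ∀ g, U g x = x}) (x : H) {ε : ℝ} (hε : 0 < ε) :
    ∃ T ∈ SS U, ‖T x - (K.orthogonalProjection x : H)‖ < ε := by
  have hfixK : ∀ z ∈ K, ∀ g, U g z = z := fun z hz => by
    have : z ∈ (K : Set H) := hz
    rw [hK] at this; exact this
  set O : Set H := Set.range fun g => U g x with hO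
  set C : Set H := closure (convexHull ℝ O) with hCdef
  have hxC : x ∈ C := subset_closure (subset_convexHull ℝ _ ⟨1, by simp⟩)
  have hne : C.Nonempty := ⟨x, hxC⟩
  have hcl : IsClosed C := isClosed_closure
  have hconv : Convex ℝ C := (convex_convexHull ℝ O).closure
  obtain ⟨v, hvC, hmin⟩ : ∃ v ∈ C, ∀ w ∈ C, ‖w‖ = ‖v‖ → w = v := by
    letI : InnerProductSpace ℝ H := InnerProductSpace.rclikeToReal ℂ H
    exact min_norm_unique hne hcl hconv
  -- each `U g` maps `C` into itself
  have hUC : ∀ g : G, ∀ c ∈ C, U g c ∈ C := by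
    intro g c hc
    have hlin : IsLinearMap ℝ fun y : H => U g y := by
      refine ⟨fun y z => map_add _ _ _, fun a y => ?_⟩
      rw [RCLike.real_smul_eq_coe_smul (K := ℂ) a, RCLike.real_smul_eq_coe_smul (K := ℂ) a,
        map_smul]
    have h1 : (fun y : H => U g y) '' O ⊆ O := by
      rintro _ ⟨_, ⟨h, rfl⟩, rfl⟩
      exact ⟨g * h, by simp [map_mul]⟩
    have h2 : U g c ∈ (fun y : H => U g y) '' C := ⟨c, hc, rfl⟩
    have h3 : (fun y : H => U g y) '' C ⊆ closure ((fun y : H => U g y) '' convexHull ℝ O) :=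
      image_closure_subset_closure_image (U g).continuous
    have h4 := h3 h2
    rw [hlin.image_convexHull] at h4
    exact closure_mono (convexHull_mono h1) h4
  have hfix : ∀ g, U g v = v := fun g => hmin _ (hUC g v hvC) ((U g).norm_map v)
  have hvK : v ∈ K := by rw [← SetLike.mem_coe, hK]; exact hfix
  have hinner : ∀ w ∈ K, ⟪x - v, w⟫_ℂ = 0 := by
    intro w hw
    have hfw : ∀ g, U g w = w := hfixK w hw
    have hD : C ⊆ {c : H | ⟪c, w⟫_ℂ = ⟪x, w⟫_ℂ} := by
      apply closure_minimal
      · apply convexHull_min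
        · rintro _ ⟨g, rfl⟩
          show ⟪U g x, w⟫_ℂ = ⟪x, w⟫_ℂ
          conv_lhs => rw [← hfw g]
          exact (U g).inner_map_map x w
        · intro c1 h1 c2 h2 a b ha hb hab
          show ⟪a • c1 + b • c2, w⟫_ℂ = ⟪x, w⟫_ℂ
          rw [inner_add_left, RCLike.real_smul_eq_coe_smul (K := ℂ) a,
            RCLike.real_smul_eq_coe_smul (K := ℂ) b, inner_smul_left, inner_smul_left,
            h1, h2, RCLike.conj_ofReal, RCLike.conj_ofReal, ← add_mul, ← RCLike.ofReal_add,
            hab, RCLike.ofReal_one, one_mul]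
      · exact isClosed_eq (Continuous.inner continuous_id continuous_const) continuous_const
    have hvw : ⟪v, w⟫_ℂ = ⟪x, w⟫_ℂ := hD hvC
    rw [inner_sub_left, hvw, sub_self]
  have hPx : (K.orthogonalProjection x : H) = v :=
    Submodule.eq_starProjection_of_mem_of_inner_eq_zero hvK hinner
  obtain ⟨c, hcch, hdist⟩ : ∃ c ∈ convexHull ℝ O, dist v c < ε := by
    have hv' := hvC
    rw [hCdef, Metric.mem_closure_iff] at hv'
    exact hv' ε hε
  have hlin : IsLinearMap ℝ fun T : H →L[ℂ] H => T x :=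
    ⟨fun f g => rfl, fun a f => rfl⟩
  have himg : (fun T : H →L[ℂ] H => T x) '' SS U = convexHull ℝ O := by
    rw [SS, hlin.image_convexHull, ← Set.range_comp]
    rfl
  have hc' : c ∈ (fun T : H →L[ℂ] H => T x) '' SS U := by rw [himg]; exact hcch
  obtain ⟨T, hTS, hTx⟩ := hc'
  refine ⟨T, hTS, ?_⟩
  rw [hPx]
  show ‖T x - v‖ < ε
  rw [show T x = c from hTx, ← dist_eq_norm, dist_comm]
  exact hdist


private theorem SS_proj (K : Submodule ℂ H) [K.HasOrthogonalProjection]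
    (hK : (K : Set H) = {x : H | ∀ g, U g x = x}) {T : H →L[ℂ] H} (hT : T ∈ SS U) (y : H) :
    (K.orthogonalProjection (T y) : H) = K.orthogonalProjection y := by
  have hfixK : ∀ z ∈ K, ∀ g, U g z = z := fun z hz => by
    have : z ∈ (K : Set H) := hz
    rw [hK] at this; exact this
  apply Submodule.eq_starProjection_of_mem_orthogonal (K.orthogonalProjection y).2
  have h1 : T y - y ∈ Kᗮ := by
    rw [Submodule.mem_orthogonal]
    intro u hu
    rw [inner_sub_right, SS_inner U hT (hfixK u hu) y, sub_self]
  have h2 : y - (K.orthogonalProjection y : H) ∈ Kᗮ :=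
    Submodule.sub_starProjection_mem_orthogonal y
  have := Kᗮ.add_mem h1 h2
  rwa [sub_add_sub_cancel] at this

end AB

theorem orthogonalProjection_mem_strong_closure_convexHull
    {G : Type*} [Group G] {H : Type*} [NormedAddCommGroup H] [InnerProductSpace ℂ H]
    [CompleteSpace H]
    (U : G →* (H ≃ₗᵢ[ℂ] H)) (K : Submodule ℂ H) [K.HasOrthogonalProjection]
    (hK : (K : Set H) = {x : H | ∀ g, U g x = x}) :
    ∀ ε > 0, ∀ s : Finset H,
      ∃ T ∈ convexHull ℝ
          (Set.range fun g => (U g).toLinearIsometry.toContinuousLinearMap),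
        ∀ x ∈ s, ‖T x - (K.subtypeL.comp K.orthogonalProjectionOnto) x‖ < ε := by
  intro ε hε s
  have hfixK : ∀ z ∈ K, ∀ g, U g z = z := fun z hz => by
    have : z ∈ (K : Set H) := hz
    rw [hK] at this; exact this
  classical
  induction s using Finset.induction_on with
  | empty =>
    exact ⟨(U 1).toLinearIsometry.toContinuousLinearMap, mem_SS_of_g U 1, by simp⟩
  | insert _ _ hnotmem ih =>
    rename_i a t
    obtain ⟨T, hTS, hT⟩ := ih
    obtain ⟨T', hT'S, hT'⟩ := SS_exists_approx U K hK (T a) hε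
    refine ⟨T'.comp T, SS_comp U hT'S hTS, ?_⟩
    intro x hx
    rcases Finset.mem_insert.1 hx with rfl | hxt
    · have hP : (K.orthogonalProjection (T x) : H) = K.orthogonalProjection x :=
        SS_proj U K hK hTS x
      have : ‖T' (T x) - (K.orthogonalProjection (T x) : H)‖ < ε := hT'
      rw [hP] at this
      simpa using this
    · have hx' := hT x hxt
      have hPmem : (K.orthogonalProjection x : H) ∈ K := (K.orthogonalProjection x).2
      have hfixP : T' (K.orthogonalProjection x : H) = (K.orthogonalProjection x : H) :=
        SS_fix U hT'S (hfixK _ hPmem)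
      have : ‖T' (T x) - (K.orthogonalProjection x : H)‖
          = ‖T' (T x - (K.orthogonalProjection x : H))‖ := by
        rw [map_sub, hfixP]
      calc ‖(T'.comp T) x - (K.subtypeL.comp (K.orthogonalProjection)) x‖
          = ‖T' (T x - (K.orthogonalProjection x : H))‖ := by
            simp only [ContinuousLinearMap.comp_apply, K.coe_subtypeL', Submodule.coe_subtype]
            exact this
        _ ≤ ‖T x - (K.orthogonalProjection x : H)‖ := SS_norm_apply U hT'S _
        _ < ε := by
            simpa only [ContinuousLinearMap.comp_apply, K.coe_subtypeL',
              Submodule.coe_subtype] using hx'
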